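/- Let ω, τ be nonempty words over ℕ with p_ω = p_τ, with last letters ω_k and τ_m respectively. Then: (i) E(a(ω)) = E(a(τ)); (ii) if ω_k = τ_m, then E(a(ω,∞)) = E(a(τ,∞)); (iii) if ω_k ≥ 2 and τ_m = 1, then E(a(ω,∞)) = (1/3)·E(a(τ,∞)); (iv) if ω_k = 1 and τ_m ≥ 2, then E(a(ω,∞)) = 3·E(a(τ,∞)). -/

import Mathlib

open MeasureTheory

noncomputable section

/-- The contractive similarity `S j x = x / 2^(j+1) + 1 - 1/2^(j-1)` (used for `j ≥ 1`). -/
def S (j : ℕ) (x : ℝ) : ℝ := x / 2 ^ (j + 1) + 1 - 1 / 2 ^ (j - 1)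

/-- The similarity ratio `s j = 1/2^(j+1)`. -/
def s (j : ℕ) : ℝ := 1 / 2 ^ (j + 1)

/-- The probability vector: `p 1 = 1/4`, `p j = 3/2^(j+1)` for `j ≥ 2`. -/
def p (j : ℕ) : ℝ := if j = 1 then 1 / 4 else 3 / 2 ^ (j + 1)

/-- `Sw ω = S_{ω_1} ∘ ⋯ ∘ S_{ω_k}`. -/
def Sw (ω : List ℕ) : ℝ → ℝ := ω.foldr (fun j f => S j ∘ f) id

/-- `pw ω = p_{ω_1} ⋯ p_{ω_k}`. -/
def pw (ω : List ℕ) : ℝ := (ω.map p).prod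

/-- `sw ω = s_{ω_1} ⋯ s_{ω_k}`. -/
def sw (ω : List ℕ) : ℝ := (ω.map s).prod

/-- The basic interval `J_ω = S_ω([0,1])`. -/
def Jw (ω : List ℕ) : Set ℝ := Sw ω '' Set.Icc 0 1

/-- The last letter of a word (junk value `0` for the empty word). -/
def wlast (ω : List ℕ) : ℕ := ω.getLastD 0

/-- `wext ω j = ω^-(ω_k + j)`: the word `ω` with its last letter increased by `j`. -/
def wext (ω : List ℕ) (j : ℕ) : List ℕ := ω.dropLast ++ [wlast ω + j]

/-- `J_{(ω,∞)} = ⋃_{j=1}^∞ J_{ω^-(ω_k+j)}`. -/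
def Jinf (ω : List ℕ) : Set ℝ := ⋃ j : ℕ, Jw (wext ω (j + 1))

/-- `a(ω) = S_ω(4/7)`. -/
def aw (ω : List ℕ) : ℝ := Sw ω (4 / 7)

/-- `a(ω,∞) = S_{ω^-(ω_k+1)}(4/7) + (8/7) s_{ω^-(ω_k+1)}`. -/
def ainf (ω : List ℕ) : ℝ := Sw (wext ω 1) (4 / 7) + (8 / 7) * sw (wext ω 1)

/-- A (nonempty) word over the alphabet `{1, 2, 3, …}`. -/
def IsWord (ω : List ℕ) : Prop := ω ≠ [] ∧ ∀ i ∈ ω, 1 ≤ i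

/-- The invariance relation `P(A) = ∑_{j=1}^∞ p_j P(S_j⁻¹ A)`. -/
def Invariant (P : Measure ℝ) : Prop :=
  ∀ A : Set ℝ, MeasurableSet A →
    P A = ∑' j : ℕ, ENNReal.ofReal (p (j + 1)) * P (S (j + 1) ⁻¹' A)

/-- The distortion error `∫ min_{a ∈ α} (x-a)² dP` of a set `α ⊆ ℝ`. -/
def distortion (P : Measure ℝ) (α : Set ℝ) : ℝ :=
  ∫ x, (⨅ a : α, (x - (a : ℝ)) ^ 2) ∂P

/-- The `n`-th quantization error for `P`. -/
def quantErr (P : Measure ℝ) (n : ℕ) : ℝ :=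
  sInf {r : ℝ | ∃ α : Set ℝ, 1 ≤ α.ncard ∧ α.ncard ≤ n ∧ r = distortion P α}

/-- `α` is an optimal set of `n`-means for `P`. -/
def IsOptimal (P : Measure ℝ) (n : ℕ) (α : Set ℝ) : Prop :=
  1 ≤ α.ncard ∧ α.ncard ≤ n ∧ distortion P α = quantErr P n

/-- `E(a(ω)) = ∫_{J_ω} (x - a(ω))² dP`. -/
def Ea (P : Measure ℝ) (ω : List ℕ) : ℝ := ∫ x in Jw ω, (x - aw ω) ^ 2 ∂P

/-- `E(a(ω,∞)) = ∫_{J_{(ω,∞)}} (x - a(ω,∞))² dP`. -/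
def Eainf (P : Measure ℝ) (ω : List ℕ) : ℝ := ∫ x in Jinf ω, (x - ainf ω) ^ 2 ∂P

/-- The Voronoi region `M(a|α)`. -/
def voronoi (α : Set ℝ) (a : ℝ) : Set ℝ := {x : ℝ | ∀ b ∈ α, |x - a| ≤ |x - b|}





lemma S_apply (j : ℕ) (x : ℝ) : S j x = s j * x + (1 - 1 / 2 ^ (j - 1)) := by
  simp [S, s]; ring

lemma s_pos (j : ℕ) : 0 < s j := by unfold s; positivity

lemma p_nonneg (j : ℕ) : 0 ≤ p j := by unfold p; split <;> positivity

lemma Sw_nil : Sw [] = id := rfl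
lemma Sw_cons (j : ℕ) (ρ : List ℕ) : Sw (j :: ρ) = S j ∘ Sw ρ := rfl
lemma Sw_append (a b : List ℕ) : Sw (a ++ b) = Sw a ∘ Sw b := by
  induction a with
  | nil => rfl
  | cons j ρ ih => simp [Sw_cons, List.cons_append, ih]; rfl

lemma pw_nil : pw [] = 1 := rfl
lemma pw_cons (j : ℕ) (ρ : List ℕ) : pw (j :: ρ) = p j * pw ρ := by simp [pw]
lemma pw_append (a b : List ℕ) : pw (a ++ b) = pw a * pw b := by simp [pw]
lemma sw_nil : sw [] = 1 := rfl
lemma sw_cons (j : ℕ) (ρ : List ℕ) : sw (j :: ρ) = s j * sw ρ := by simp [sw]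
lemma sw_append (a b : List ℕ) : sw (a ++ b) = sw a * sw b := by simp [sw]
lemma sw_single (j : ℕ) : sw [j] = s j := by simp [sw]
lemma pw_single (j : ℕ) : pw [j] = p j := by simp [pw]

lemma sw_pos (ω : List ℕ) : 0 < sw ω := by
  induction ω with
  | nil => norm_num [sw_nil]
  | cons j ρ ih => rw [sw_cons]; exact mul_pos (s_pos j) ih

lemma pw_nonneg (ω : List ℕ) : 0 ≤ pw ω := by
  induction ω with
  | nil => norm_num [pw_nil]
  | cons j ρ ih => rw [pw_cons]; exact mul_nonneg (p_nonneg j) ih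

lemma Sw_affine (ω : List ℕ) (x : ℝ) : Sw ω x = sw ω * x + Sw ω 0 := by
  induction ω generalizing x with
  | nil => simp [Sw_nil, sw_nil]
  | cons j ρ ih =>
    simp only [Sw_cons, Function.comp_apply, sw_cons]
    rw [S_apply, ih x, ih 0, S_apply]
    ring

lemma Sw_sub (ω : List ℕ) (x y : ℝ) : Sw ω x - Sw ω y = sw ω * (x - y) := by
  rw [Sw_affine ω x, Sw_affine ω y]; ring

lemma Sw_add_const (ω : List ℕ) (x c : ℝ) : Sw ω x + sw ω * c = Sw ω (x + c) := by
  rw [Sw_affine, Sw_affine ω (x+c)]; ring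

-- image of affine map as preimage
lemma aff_image (m c : ℝ) (hm : m ≠ 0) (D : Set ℝ) :
    (fun x => m * x + c) '' D = (fun y => (y - c) / m) ⁻¹' D := by
  ext y
  constructor
  · rintro ⟨x, hx, rfl⟩
    simpa [mul_comm, mul_div_assoc, mul_div_cancel_left₀ _ hm] using hx
  · intro hy
    exact ⟨(y - c)/m, hy, by field_simp; ring⟩

lemma Sw_image_eq_preimage (ω : List ℕ) (D : Set ℝ) :
    Sw ω '' D = (fun y => (y - Sw ω 0) / sw ω) ⁻¹' D := by
  have hrep : Sw ω = fun x => sw ω * x + Sw ω 0 := funext (Sw_affine ω)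
  conv_lhs => rw [hrep]
  rw [aff_image _ _ (ne_of_gt (sw_pos ω)) D]

lemma Sw_image_measurable (ω : List ℕ) {D : Set ℝ} (hD : MeasurableSet D) :
    MeasurableSet (Sw ω '' D) := by
  rw [Sw_image_eq_preimage]
  exact hD.preimage (by fun_prop)

lemma Sw_continuous (ω : List ℕ) : Continuous (Sw ω) := by
  rw [show Sw ω = fun x => sw ω * x + Sw ω 0 from funext (Sw_affine ω)]
  fun_prop

lemma Sw_injective (ω : List ℕ) : Function.Injective (Sw ω) := by
  intro a b hab
  have := Sw_sub ω a b
  rw [hab, sub_self] at this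
  have h2 := (mul_eq_zero.mp this.symm).resolve_left (ne_of_gt (sw_pos ω))
  linarith

lemma S_maps (k : ℕ) {x : ℝ} (hx : x ∈ Set.Icc (0:ℝ) 1) : S (k+1) x ∈ Set.Icc (0:ℝ) 1 := by
  obtain ⟨h0, h1⟩ := hx
  simp only [S, Set.mem_Icc, Nat.add_sub_cancel]
  have hk : (1:ℝ) ≤ 2^k := one_le_pow₀ (by norm_num)
  have hk2 : (2:ℝ)^k ≤ 2^(k+1+1) := by
    apply pow_le_pow_right₀ (by norm_num); omega
  constructor
  · have h2 : (1:ℝ)/2^k ≤ 1 := by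
      rw [div_le_one (by positivity)]; exact hk
    have : 0 ≤ x / 2^(k+1+1) := by positivity
    linarith
  · have h3 : x / 2^(k+1+1) ≤ 1/2^k := by
      apply div_le_div₀ (by norm_num) h1 (by positivity) hk2
    linarith [h3]
-- continuation: disjointness and key measure lemmas
def Icc01 : Set ℝ := Set.Icc 0 1

lemma Icc01_meas : MeasurableSet Icc01 := measurableSet_Icc

lemma Sw_maps (ω : List ℕ) (hω : ∀ i ∈ ω, 1 ≤ i) {x : ℝ} (hx : x ∈ Icc01) :
    Sw ω x ∈ Icc01 := by
  induction ω with
  | nil => exact hx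
  | cons j ρ ih =>
    have hj : 1 ≤ j := hω j (by simp)
    obtain ⟨k, rfl⟩ : ∃ k, j = k + 1 := ⟨j - 1, by omega⟩
    have h1 : Sw ρ x ∈ Icc01 := ih (fun i hi => hω i (by simp [hi]))
    exact S_maps k h1

-- S (i+1) 1 < S (j+1) 0 for i < j
lemma S_lt {i j : ℕ} (hij : i < j) : S (i+1) 1 < S (j+1) 0 := by
  simp only [S, Nat.add_sub_cancel, zero_div]
  have h1 : (1:ℝ)/2^j ≤ 1/2^(i+1) := by
    apply div_le_div_of_nonneg_left (by norm_num) (by positivity)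
    apply pow_le_pow_right₀ (by norm_num); omega
  have h2 : (1:ℝ)/2^(i+1) = 2 * (1/2^(i+1+1)) := by
    rw [show i+1+1 = (i+1)+1 from rfl, pow_succ]; field_simp; ring
  have h3 : (1:ℝ)/2^(i+1+1) > 0 := by positivity
  have h4 : (1:ℝ)/2^i = 4 * (1/2^(i+1+1)) := by
    rw [show i+1+1 = i+2 from rfl, pow_add]; field_simp; ring
  linarith [h1, h2, h3, h4]

lemma J_subset (j : ℕ) : S (j+1) '' Icc01 ⊆ Set.Icc (S (j+1) 0) (S (j+1) 1) := by
  rintro y ⟨x, ⟨hx0, hx1⟩, rfl⟩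
  have hm : ∀ a b : ℝ, a ≤ b → S (j+1) a ≤ S (j+1) b := by
    intro a b hab
    simp only [S]
    have : a / 2^(j+1+1) ≤ b / 2^(j+1+1) := by gcongr
    linarith
  exact ⟨hm 0 x hx0, hm x 1 hx1⟩

lemma J_disjoint {i j : ℕ} (hij : i ≠ j) :
    Disjoint (S (i+1) '' Icc01) (S (j+1) '' Icc01) := by
  wlog h : i < j generalizing i j
  · exact (this hij.symm (by omega)).symm
  rw [Set.disjoint_left]
  intro y hyi hyj
  obtain ⟨hi0, hi1⟩ := J_subset i hyi
  obtain ⟨hj0, hj1⟩ := J_subset j hyj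
  have := S_lt h
  linarith
variable {P : Measure ℝ} [IsProbabilityMeasure P]

lemma compl_null (hsupp : P Icc01 = 1) : P Icc01ᶜ = 0 := by
  rw [measure_compl Icc01_meas (measure_ne_top P _), hsupp, measure_univ, tsub_self]

lemma outside_null (hsupp : P Icc01 = 1) {A : Set ℝ} (hA : A ∩ Icc01 = ∅) : P A = 0 := by
  have : A ⊆ Icc01ᶜ := by
    intro x hx
    intro hxI
    exact absurd (Set.mem_inter hx hxI) (by simp [hA])
  exact le_antisymm ((measure_mono this).trans (compl_null hsupp).le) (zero_le)

-- single-letter image measure: P (S(j+1) '' D) = p(j+1) * P D for D ⊆ [0,1]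
lemma measure_S_image (hsupp : P Icc01 = 1) (hinv : Invariant P) (j : ℕ)
    {D : Set ℝ} (hD : MeasurableSet D) (hDI : D ⊆ Icc01) :
    P (S (j+1) '' D) = ENNReal.ofReal (p (j+1)) * P D := by
  have hSmeas : MeasurableSet (S (j+1) '' D) := by
    have := Sw_image_measurable [j+1] hD
    simpa [Sw, Function.comp] using this
  have hSinj : Function.Injective (S (j+1)) := by
    have := Sw_injective [j+1]
    simpa [Sw, Function.comp] using this
  rw [hinv _ hSmeas]
  rw [tsum_eq_single j]
  · rw [Set.preimage_image_eq D hSinj]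
  · intro i hij
    have hzero : P (S (i+1) ⁻¹' (S (j+1) '' D)) = 0 := by
      apply outside_null hsupp
      ext x
      simp only [Set.mem_inter_iff, Set.mem_preimage, Set.mem_empty_iff_false, iff_false]
      rintro ⟨hmem, hxI⟩
      have h1 : S (i+1) x ∈ S (i+1) '' Icc01 := ⟨x, hxI, rfl⟩
      have h2 : S (i+1) x ∈ S (j+1) '' Icc01 := Set.image_mono hDI hmem
      exact Set.disjoint_left.mp (J_disjoint hij) h1 h2
    rw [hzero, mul_zero]

-- word version
lemma measure_Sw_image (hsupp : P Icc01 = 1) (hinv : Invariant P) (ω : List ℕ)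
    (hω : ∀ i ∈ ω, 1 ≤ i) {D : Set ℝ} (hD : MeasurableSet D) (hDI : D ⊆ Icc01) :
    P (Sw ω '' D) = ENNReal.ofReal (pw ω) * P D := by
  induction ω with
  | nil => simp [Sw_nil, pw_nil]
  | cons j ρ ih =>
    have hj : 1 ≤ j := hω j (by simp)
    obtain ⟨k, rfl⟩ : ∃ k, j = k + 1 := ⟨j - 1, by omega⟩
    have hρ : ∀ i ∈ ρ, 1 ≤ i := fun i hi => hω i (by simp [hi])
    have himg : Sw ((k+1) :: ρ) '' D = S (k+1) '' (Sw ρ '' D) := by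
      rw [Sw_cons, Set.image_comp]
    rw [himg, measure_S_image hsupp hinv k (Sw_image_measurable ρ hD)
        (by rintro y ⟨x, hx, rfl⟩; exact Sw_maps ρ hρ (hDI hx)),
      ih hρ, pw_cons, ENNReal.ofReal_mul (p_nonneg _), mul_assoc]

-- restriction identity
lemma restrict_Sw_image (hsupp : P Icc01 = 1) (hinv : Invariant P) (ω : List ℕ)
    (hω : ∀ i ∈ ω, 1 ≤ i) {D : Set ℝ} (hD : MeasurableSet D) (hDI : D ⊆ Icc01) :
    P.restrict (Sw ω '' D) = ENNReal.ofReal (pw ω) • (P.restrict D).map (Sw ω) := by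
  ext B hB
  rw [Measure.restrict_apply hB, Measure.smul_apply,
    Measure.map_apply (Sw_continuous ω).measurable hB, Measure.restrict_apply (hB.preimage (Sw_continuous ω).measurable)]
  have h1 : B ∩ Sw ω '' D = Sw ω '' (Sw ω ⁻¹' B ∩ D) := by
    rw [Set.inter_comm (Sw ω ⁻¹' B) D, Set.image_inter_preimage, Set.inter_comm]
  rw [h1, measure_Sw_image hsupp hinv ω hω ((hB.preimage (Sw_continuous ω).measurable).inter hD)
    (fun x hx => hDI hx.2), smul_eq_mul]

-- integral transfer
lemma integral_Sw_image (hsupp : P Icc01 = 1) (hinv : Invariant P) (ω : List ℕ)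
    (hω : ∀ i ∈ ω, 1 ≤ i) {D : Set ℝ} (hD : MeasurableSet D) (hDI : D ⊆ Icc01)
    (g : ℝ → ℝ) (hg : Continuous g) :
    ∫ x in Sw ω '' D, g x ∂P = pw ω * ∫ x in D, g (Sw ω x) ∂P := by
  rw [restrict_Sw_image hsupp hinv ω hω hD hDI, integral_smul_measure,
    integral_map (Sw_continuous ω).measurable.aemeasurable hg.aestronglyMeasurable,
    ENNReal.toReal_ofReal (pw_nonneg ω), smul_eq_mul]
def Vq (P : Measure ℝ) : ℝ := ∫ x in Icc01, (x - 4/7) ^ 2 ∂P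

lemma Sw_one (j : ℕ) : Sw [j] = S j := by
  funext x; rfl

lemma Ea_formula (hsupp : P Icc01 = 1) (hinv : Invariant P) (ω : List ℕ)
    (hω : ∀ i ∈ ω, 1 ≤ i) :
    Ea P ω = pw ω * ((sw ω)^2 * Vq P) := by
  have : Ea P ω = ∫ x in Sw ω '' Icc01, (x - aw ω) ^ 2 ∂P := rfl
  rw [this, integral_Sw_image hsupp hinv ω hω Icc01_meas (fun x hx => hx) _
    (by fun_prop)]
  have hpt : ∀ x : ℝ, (Sw ω x - aw ω)^2 = (sw ω)^2 * (x - 4/7)^2 := by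
    intro x
    rw [show aw ω = Sw ω (4/7) from rfl, Sw_sub, mul_pow]
  simp only [hpt]
  rw [MeasureTheory.integral_const_mul, Vq]

-- tail sets
def Tt (k : ℕ) : Set ℝ := ⋃ i : ℕ, S (k + i + 1) '' Icc01

lemma Tt_subset (k : ℕ) : Tt k ⊆ Icc01 := by
  rintro y hy
  obtain ⟨i, x, hx, rfl⟩ := by simpa [Tt] using hy
  exact S_maps (k+i) hx

lemma Tt_meas (k : ℕ) : MeasurableSet (Tt k) := by
  apply MeasurableSet.iUnion
  intro i
  have := Sw_image_measurable [k+i+1] Icc01_meas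
  simpa [Sw_one] using this

lemma Jinf_eq (ω : List ℕ) : Jinf ω = Sw ω.dropLast '' Tt (wlast ω) := by
  rw [Jinf, Tt, Set.image_iUnion]
  apply Set.iUnion_congr
  intro i
  rw [Jw, wext, Sw_append, Sw_one, Set.image_comp]
  norm_num [Icc01]
  rw [show wlast ω + (i+1) = wlast ω + i + 1 by ring]

def bq (k : ℕ) : ℝ := S (k+1) (4/7) + (8/7) * s (k+1)

lemma bq_eq (k : ℕ) : bq k = 1 - (4/7)/2^k := by
  simp only [bq, S, s, Nat.add_sub_cancel]
  rw [show k+1+1 = k+2 from rfl, pow_add]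
  field_simp
  ring

lemma ainf_eq (ω : List ℕ) : ainf ω = Sw ω.dropLast (bq (wlast ω)) := by
  rw [ainf, wext, Sw_append, sw_append, Sw_one, sw_single, Function.comp_apply,
    show wlast ω + 1 = (wlast ω) + 1 from rfl]
  rw [show (8:ℝ)/7 * (sw ω.dropLast * s (wlast ω + 1))
      = sw ω.dropLast * (s (wlast ω + 1) * (8/7)) by ring, Sw_add_const]
  congr 1
  rw [bq]
  ring

def Gq (P : Measure ℝ) (k : ℕ) : ℝ := ∫ x in Tt k, (x - bq k) ^ 2 ∂P

lemma Eainf_formula (hsupp : P Icc01 = 1) (hinv : Invariant P) (ω : List ℕ)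
    (hω : ∀ i ∈ ω, 1 ≤ i) :
    Eainf P ω = pw ω.dropLast * ((sw ω.dropLast)^2 * Gq P (wlast ω)) := by
  have hdl : ∀ i ∈ ω.dropLast, 1 ≤ i := fun i hi => hω i (List.dropLast_subset ω hi)
  rw [Eainf, Jinf_eq, ainf_eq,
    integral_Sw_image hsupp hinv ω.dropLast hdl (Tt_meas _) (Tt_subset _) _ (by fun_prop)]
  have hpt : ∀ x : ℝ, (Sw ω.dropLast x - Sw ω.dropLast (bq (wlast ω)))^2
      = (sw ω.dropLast)^2 * (x - bq (wlast ω))^2 := by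
    intro x; rw [Sw_sub, mul_pow]
  simp only [hpt]
  rw [MeasureTheory.integral_const_mul, Gq]
def phiM (m : ℕ) (y : ℝ) : ℝ := (y - 1) / 2 ^ m + 1

lemma phiM_continuous (m : ℕ) : Continuous (phiM m) := by unfold phiM; fun_prop

lemma phiM_S (m i : ℕ) (x : ℝ) : phiM m (S (i+2) x) = S (m+i+2) x := by
  simp only [phiM, S, show i+2-1 = i+1 by omega, show m+i+2-1 = m+(i+1) by omega,
    show i+2+1 = (i+1)+2 by omega, show m+i+2+1 = m+((i+1)+2) by omega, pow_add]
  have h1 : (0:ℝ) < 2^m := by positivity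
  have h2 : (0:ℝ) < 2^(i+1) := by positivity
  field_simp
  ring

lemma phiM_sub (m : ℕ) (x y : ℝ) : phiM m x - phiM m y = (x - y) / 2 ^ m := by
  simp only [phiM]; ring

lemma p_val (i : ℕ) : p (i+2) = 3 / 2^(i+3) := by
  simp [p, show i+2+1 = i+3 from rfl]

lemma p_scale (m i : ℕ) : (1/2:ℝ)^m * p (i+2) = p (m+i+2) := by
  rw [p_val, p_val, show m+i+3 = m+(i+3) by omega, pow_add, div_pow, one_pow]
  have h1 : (0:ℝ) < 2^m := by positivity
  have h2 : (0:ℝ) < 2^(i+3) := by positivity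
  field_simp
  ring

variable {P : Measure ℝ} [IsProbabilityMeasure P]

lemma measure_Tt_inter (hsupp : P Icc01 = 1) (hinv : Invariant P) (k : ℕ)
    {B : Set ℝ} (hB : MeasurableSet B) :
    P (B ∩ Tt k) = ∑' i : ℕ, ENNReal.ofReal (p (k+i+1)) * P (Icc01 ∩ S (k+i+1) ⁻¹' B) := by
  rw [Tt, Set.inter_iUnion, measure_iUnion]
  · apply tsum_congr
    intro i
    have h1 : B ∩ S (k+i+1) '' Icc01 = S (k+i+1) '' (Icc01 ∩ S (k+i+1) ⁻¹' B) := by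
      rw [Set.image_inter_preimage, Set.inter_comm]
    rw [h1]
    have := measure_S_image hsupp hinv (k+i)
      (Icc01_meas.inter (hB.preimage (by
        have := Sw_continuous [k+i+1]
        simpa [Sw_one] using this.measurable))) (fun x hx => hx.1)
    simpa using this
  · intro i i' hii'
    have := J_disjoint (i := k+i) (j := k+i') (by omega)
    exact Disjoint.mono (Set.inter_subset_right) (Set.inter_subset_right) this
  · intro i
    apply hB.inter
    have := Sw_image_measurable [k+i+1] Icc01_meas
    simpa [Sw_one] using this

lemma restrict_Tt (hsupp : P Icc01 = 1) (hinv : Invariant P) (m : ℕ) :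
    P.restrict (Tt (m+1)) = ENNReal.ofReal ((1/2)^m) • (P.restrict (Tt 1)).map (phiM m) := by
  ext B hB
  rw [Measure.restrict_apply hB, Measure.smul_apply,
    Measure.map_apply (phiM_continuous m).measurable hB,
    Measure.restrict_apply (hB.preimage (phiM_continuous m).measurable),
    measure_Tt_inter hsupp hinv (m+1) hB,
    measure_Tt_inter hsupp hinv 1 (hB.preimage (phiM_continuous m).measurable),
    smul_eq_mul, ← ENNReal.tsum_mul_left]
  apply tsum_congr
  intro i
  have hcomp : S (1+i+1) ⁻¹' (phiM m ⁻¹' B) = S (m+1+i+1) ⁻¹' B := by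
    ext x
    simp only [Set.mem_preimage]
    rw [show (1:ℕ)+i+1 = i+2 by omega, phiM_S m i x, show m+1+i+1 = m+i+2 by omega]
  rw [hcomp, ← mul_assoc, ← ENNReal.ofReal_mul (by positivity),
    show (1:ℕ)+i+1 = i+2 by omega, p_scale m i, show m+1+i+1 = m+i+2 by omega]

lemma bq_diff (m : ℕ) (x : ℝ) : phiM m x - bq (m+1) = (x - bq 1) / 2^m := by
  rw [bq_eq, bq_eq, phiM]
  have h1 : (0:ℝ) < 2^m := by positivity
  rw [show m+1 = m+1 from rfl, pow_add]
  field_simp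
  ring

lemma Gq_scale (hsupp : P Icc01 = 1) (hinv : Invariant P) (m : ℕ) :
    Gq P (m+1) = (1/8)^m * Gq P 1 := by
  rw [Gq, restrict_Tt hsupp hinv m, integral_smul_measure,
    integral_map (phiM_continuous m).measurable.aemeasurable
      (Continuous.aestronglyMeasurable (by fun_prop)),
    ENNReal.toReal_ofReal (by positivity), smul_eq_mul]
  have hpt : ∀ x : ℝ, (phiM m x - bq (m+1))^2 = ((1/2:ℝ))^m * (((1/2:ℝ))^m * (x - bq 1)^2) := by
    intro x
    have h2 : ((1:ℝ)/2)^m = ((2:ℝ)^m)⁻¹ := by rw [one_div, inv_pow]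
    rw [bq_diff, div_pow, h2, sq ((2:ℝ)^m), div_eq_mul_inv, mul_inv]
    ring
  simp only [hpt]
  rw [MeasureTheory.integral_const_mul, MeasureTheory.integral_const_mul]
  have : Gq P 1 = ∫ x in Tt 1, (x - bq 1)^2 ∂P := rfl
  rw [← this, ← mul_assoc, ← mul_assoc]
  congr 1
  rw [← mul_pow, ← mul_pow]
  norm_num
def cwN : List ℕ → ℕ
  | [] => 0
  | j :: ρ => (if j = 1 then 0 else 1) + cwN ρ

def ewN : List ℕ → ℕ
  | [] => 0
  | j :: ρ => (j + 1) + ewN ρ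

lemma cwN_append (a b : List ℕ) : cwN (a ++ b) = cwN a + cwN b := by
  induction a with
  | nil => simp [cwN]
  | cons j ρ ih => simp [cwN, ih]; omega

lemma ewN_append (a b : List ℕ) : ewN (a ++ b) = ewN a + ewN b := by
  induction a with
  | nil => simp [ewN]
  | cons j ρ ih => simp [ewN, ih]; omega

lemma cwN_single (k : ℕ) : cwN [k] = if k = 1 then 0 else 1 := by simp [cwN]
lemma ewN_single (k : ℕ) : ewN [k] = k + 1 := by simp [ewN]

lemma sw_eq (ω : List ℕ) : sw ω = (1/2:ℝ)^(ewN ω) := by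
  induction ω with
  | nil => simp [sw_nil, ewN]
  | cons j ρ ih =>
    rw [sw_cons, ih, show ewN (j :: ρ) = (j+1) + ewN ρ from rfl, pow_add]
    congr 1
    rw [s, div_pow, one_pow]

lemma pw_eq (ω : List ℕ) (hω : ∀ i ∈ ω, 1 ≤ i) :
    pw ω = 3^(cwN ω) * (1/2:ℝ)^(ewN ω) := by
  induction ω with
  | nil => simp [pw_nil, cwN, ewN]
  | cons j ρ ih =>
    have hρ : ∀ i ∈ ρ, 1 ≤ i := fun i hi => hω i (by simp [hi])
    rw [pw_cons, ih hρ, show cwN (j :: ρ) = (if j = 1 then 0 else 1) + cwN ρ from rfl,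
      show ewN (j :: ρ) = (j+1) + ewN ρ from rfl, pow_add, pow_add]
    have hp : p j = 3^(if j = 1 then 0 else 1) * (1/2:ℝ)^(j+1) := by
      by_cases hj : j = 1
      · subst hj; norm_num [p]
      · rw [p, if_neg hj, if_neg hj, pow_one, div_pow, one_pow]
        ring
    rw [hp]; ring

lemma exp_unique {a e b f : ℕ} (h : (3:ℝ)^a * (1/2)^b = 3^e * (1/2)^f) :
    a = e ∧ b = f := by
  have h2 : (3:ℝ)^a * 2^f = 3^e * 2^b := by
    rw [one_div, inv_pow] at h
    have hb : ((2:ℝ)^b) ≠ 0 := by positivity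
    have hf : ((2:ℝ)^f) ≠ 0 := by positivity
    rw [inv_pow] at h
    field_simp at h
    linarith
  have hn : 3^a * 2^f = 3^e * 2^b := by exact_mod_cast h2
  have p3 : Nat.Prime 3 := by norm_num
  have p2 : Nat.Prime 2 := by norm_num
  have key : ∀ u v : ℕ, (3^u * 2^v).factorization
      = Finsupp.single 3 u + Finsupp.single 2 v := by
    intro u v
    rw [Nat.factorization_mul (pow_ne_zero u (by norm_num)) (pow_ne_zero v (by norm_num)),
      p3.factorization_pow, p2.factorization_pow]
  have h3 := congrArg (fun n => n.factorization 3) hn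
  have h4 := congrArg (fun n => n.factorization 2) hn
  simp only [key, Finsupp.add_apply, Finsupp.single_apply] at h3 h4
  norm_num at h3 h4
  exact ⟨h3, h4.symm⟩

lemma word_decomp (ω : List ℕ) (hne : ω ≠ []) : ω.dropLast ++ [wlast ω] = ω := by
  have h1 : wlast ω = ω.getLast hne := by
    rw [wlast, List.getLastD_eq_getLast?, List.getLast?_eq_getLast hne]
    rfl
  rw [h1]
  exact List.dropLast_append_getLast hne

/-- For nonempty words `ω, τ` with `p_ω = p_τ`: `E(a(ω)) = E(a(τ))`; if the last letters agree
then `E(a(ω,∞)) = E(a(τ,∞))`; if `ω_k ≥ 2` and `τ_m = 1` then `E(a(ω,∞)) = (1/3) E(a(τ,∞))`;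
if `ω_k = 1` and `τ_m ≥ 2` then `E(a(ω,∞)) = 3 E(a(τ,∞))`. -/
theorem stmt_16 (P : Measure ℝ) [IsProbabilityMeasure P]
    (hsupp : P (Set.Icc 0 1) = 1) (hinv : Invariant P)
    (ω τ : List ℕ) (hω : IsWord ω) (hτ : IsWord τ) (h : pw ω = pw τ) :
    Ea P ω = Ea P τ ∧
    (wlast ω = wlast τ → Eainf P ω = Eainf P τ) ∧
    (2 ≤ wlast ω → wlast τ = 1 → Eainf P ω = (1 / 3) * Eainf P τ) ∧
    (wlast ω = 1 → 2 ≤ wlast τ → Eainf P ω = 3 * Eainf P τ) := by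
  obtain ⟨hneω, hlω⟩ := hω
  obtain ⟨hneτ, hlτ⟩ := hτ
  have hsupp' : P Icc01 = 1 := hsupp
  obtain ⟨hc, he⟩ := exp_unique (a := cwN ω) (b := ewN ω) (e := cwN τ) (f := ewN τ)
    (by rw [← pw_eq ω hlω, ← pw_eq τ hlτ]; exact h)
  have hdlω : ∀ i ∈ ω.dropLast, 1 ≤ i := fun i hi => hlω i (List.dropLast_subset ω hi)
  have hdlτ : ∀ i ∈ τ.dropLast, 1 ≤ i := fun i hi => hlτ i (List.dropLast_subset τ hi)
  have hcω : cwN ω = cwN ω.dropLast + (if wlast ω = 1 then 0 else 1) := by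
    conv_lhs => rw [← word_decomp ω hneω]
    rw [cwN_append, cwN_single]
  have hcτ : cwN τ = cwN τ.dropLast + (if wlast τ = 1 then 0 else 1) := by
    conv_lhs => rw [← word_decomp τ hneτ]
    rw [cwN_append, cwN_single]
  have heω : ewN ω = ewN ω.dropLast + (wlast ω + 1) := by
    conv_lhs => rw [← word_decomp ω hneω]
    rw [ewN_append, ewN_single]
  have heτ : ewN τ = ewN τ.dropLast + (wlast τ + 1) := by
    conv_lhs => rw [← word_decomp τ hneτ]
    rw [ewN_append, ewN_single]
  refine ⟨?_, ?_, ?_, ?_⟩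
  · rw [Ea_formula hsupp' hinv ω hlω, Ea_formula hsupp' hinv τ hlτ, h, sw_eq, sw_eq, he]
  · intro hl
    have he' : ewN ω.dropLast = ewN τ.dropLast := by omega
    have hc' : cwN ω.dropLast = cwN τ.dropLast := by
      rw [hcω, hcτ, hl] at hc; omega
    rw [Eainf_formula hsupp' hinv ω hlω, Eainf_formula hsupp' hinv τ hlτ,
      pw_eq _ hdlω, pw_eq _ hdlτ, sw_eq, sw_eq, he', hc', hl]
  · intro h2 h1
    obtain ⟨m, hm⟩ : ∃ m, wlast ω = m + 2 := ⟨wlast ω - 2, by omega⟩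
    have hcω' : cwN ω = cwN ω.dropLast + 1 := by rw [hcω, hm]; simp
    have hcτ' : cwN τ = cwN τ.dropLast := by rw [hcτ, h1]; norm_num
    have heω' : ewN ω = ewN ω.dropLast + m + 3 := by rw [heω, hm]; omega
    have heτ' : ewN τ = ewN τ.dropLast + 2 := by rw [heτ, h1]
    have ec : ewN τ.dropLast = ewN ω.dropLast + m + 1 := by omega
    have cc : cwN τ.dropLast = cwN ω.dropLast + 1 := by omega
    rw [Eainf_formula hsupp' hinv ω hlω, Eainf_formula hsupp' hinv τ hlτ, hm, h1,
      pw_eq _ hdlω, pw_eq _ hdlτ, sw_eq, sw_eq, ec, cc,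
      show m + 2 = (m+1)+1 from rfl, Gq_scale hsupp' hinv (m+1),
      show ((1:ℝ)/8)^(m+1) = ((1/2:ℝ))^(3*(m+1)) by rw [pow_mul]; norm_num]
    ring
  · intro h1 h2
    obtain ⟨m, hm⟩ : ∃ m, wlast τ = m + 2 := ⟨wlast τ - 2, by omega⟩
    have hcω' : cwN ω = cwN ω.dropLast := by rw [hcω, h1]; norm_num
    have hcτ' : cwN τ = cwN τ.dropLast + 1 := by rw [hcτ, hm]; simp
    have heω' : ewN ω = ewN ω.dropLast + 2 := by rw [heω, h1]
    have heτ' : ewN τ = ewN τ.dropLast + m + 3 := by rw [heτ, hm]; omega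
    have ec : ewN ω.dropLast = ewN τ.dropLast + m + 1 := by omega
    have cc : cwN ω.dropLast = cwN τ.dropLast + 1 := by omega
    rw [Eainf_formula hsupp' hinv ω hlω, Eainf_formula hsupp' hinv τ hlτ, hm, h1,
      pw_eq _ hdlω, pw_eq _ hdlτ, sw_eq, sw_eq, ec, cc,
      show m + 2 = (m+1)+1 from rfl, Gq_scale hsupp' hinv (m+1),
      show ((1:ℝ)/8)^(m+1) = ((1/2:ℝ))^(3*(m+1)) by rw [pow_mul]; norm_num]
    ring
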